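/- Let x : ℤ → A be a uniformly recurrent non-periodic word over a finite alphabet A. Then the recurrence function satisfies R_x(n) ≥ p_x(n) + n for all n ∈ ℕ, and in particular R_x(n) ≥ 2n + 1. -/

import Mathlib

/-- The set of `n`-factors of a two-sided infinite word `w`. -/
def factorsZ {A : Type*} (w : ℤ → A) (n : ℕ) : Set (Fin n → A) :=
  {u | ∃ k : ℤ, ∀ i : Fin n, u i = w (k + (i : ℤ))}

/-- The complexity function of a two-sided infinite word. -/
noncomputable def complexityZ {A : Type*} (w : ℤ → A) (n : ℕ) : ℕ :=
  Nat.card (factorsZ w n)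

/-- `u` occurs in the length-`M` window of `w` starting at `k`. -/
def OccursIn {A : Type*} (w : ℤ → A) {n : ℕ} (u : Fin n → A) (k : ℤ) (M : ℕ) : Prop :=
  ∃ j : ℤ, k ≤ j ∧ j + (n : ℤ) ≤ k + (M : ℤ) ∧ ∀ i : Fin n, u i = w (j + (i : ℤ))

/-- `M` is a recurrence bound for length-`n` factors of `w`. -/
def IsRecurrenceBound {A : Type*} (w : ℤ → A) (n M : ℕ) : Prop :=
  ∀ u ∈ factorsZ w n, ∀ k : ℤ, OccursIn w u k M

def UniformlyRecurrent {A : Type*} (w : ℤ → A) : Prop :=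
  ∀ n : ℕ, ∃ M : ℕ, IsRecurrenceBound w n M

/-- The recurrence function of `w`. -/
noncomputable def recurrenceFn {A : Type*} (w : ℤ → A) (n : ℕ) : ℕ :=
  sInf {M | IsRecurrenceBound w n M}

def PeriodicWord {A : Type*} (w : ℤ → A) : Prop :=
  ∃ k : ℤ, 1 ≤ k ∧ ∀ i : ℤ, w (i + k) = w i

/-- The `i`-th power of the shift: `(shiftFun i y) t = y (t + i)`. -/
def shiftFun {A : Type*} (i : ℤ) (y : ℤ → A) : ℤ → A := fun t => y (t + i)

/-- Image of a set of words under the `i`-th power of the shift. -/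
def shiftSet {A : Type*} (i : ℤ) (W : Set (ℤ → A)) : Set (ℤ → A) := shiftFun i '' W

/-- factor starting at j -/
def fzz {A : Type*} (x : ℤ → A) (n : ℕ) (j : ℤ) : Fin n → A := fun i => x (j + (i : ℤ))

lemma fzz_mem {A : Type*} (x : ℤ → A) (n : ℕ) (j : ℤ) : fzz x n j ∈ factorsZ x n :=
  ⟨j, fun _ => rfl⟩

lemma mem_factorsZ {A : Type*} {x : ℤ → A} {n : ℕ} {u : Fin n → A} (hu : u ∈ factorsZ x n) :
    ∃ j, u = fzz x n j := by
  obtain ⟨k, hk⟩ := hu; exact ⟨k, funext hk⟩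

/-- forward periodicity + uniform recurrence ⇒ periodic -/
lemma fwd_periodic {A : Type*} {x : ℤ → A} (hUR : UniformlyRecurrent x) {q : ℕ} (hq : 1 ≤ q)
    {N : ℤ} (hfwd : ∀ j : ℤ, N ≤ j → x (j + (q : ℤ)) = x j) : PeriodicWord x := by
  refine ⟨(q : ℤ), by exact_mod_cast hq, fun i => ?_⟩
  obtain ⟨M, hM⟩ := hUR (q + 1)
  obtain ⟨j, hNj, _, hocc⟩ := hM (fzz x (q + 1) i) (fzz_mem _ _ _) N
  have h0 := hocc ⟨0, by omega⟩
  have hqq := hocc ⟨q, by omega⟩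
  simp only [fzz] at h0 hqq
  have hj := hfwd j hNj
  calc x (i + (q:ℤ)) = x (j + (q:ℤ)) := by
        have : x (i + ((⟨q, by omega⟩ : Fin (q+1)) : ℤ)) = x (j + ((⟨q, by omega⟩ : Fin (q+1)) : ℤ)) := hqq
        simpa using this
    _ = x j := hj
    _ = x i := by
        have : x (i + ((⟨0, by omega⟩ : Fin (q+1)) : ℤ)) = x (j + ((⟨0, by omega⟩ : Fin (q+1)) : ℤ)) := h0
        exact (by simpa using this : x i = x j).symm

lemma surj_window {A : Type*} {x : ℤ → A} {n M : ℕ} (hB : IsRecurrenceBound x n M) (k : ℤ) :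
    Function.Surjective (fun m : Fin (M - n + 1) =>
      (⟨fzz x n (k + (m : ℤ)), fzz_mem _ _ _⟩ : factorsZ x n)) := by
  rintro ⟨u, hu⟩
  obtain ⟨j, hkj, hjM, hocc⟩ := hB u hu k
  have hnM : n ≤ M := by
    obtain ⟨j', h1, h2, _⟩ := hB u hu 0
    omega
  refine ⟨⟨(j - k).toNat, by omega⟩, ?_⟩
  ext i
  simp only [fzz]
  exact (congrArg x (by push_cast; omega)).trans (hocc i).symm

lemma card_factors_le {A : Type*} [Fintype A] {x : ℤ → A} {n M : ℕ}
    (hB : IsRecurrenceBound x n M) : complexityZ x n ≤ M - n + 1 := by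
  have := Nat.card_le_card_of_surjective _ (surj_window hB 0)
  simpa [complexityZ, Nat.card_eq_fintype_card] using this

/-- if complexity is maximal (= M-n+1) and M is a recurrence bound, x is periodic -/
lemma periodic_of_max_complexity {A : Type*} [Fintype A] {x : ℤ → A} {n M : ℕ} (hn : 1 ≤ n)
    (hnM : n ≤ M) (hB : IsRecurrenceBound x n M) (hp : complexityZ x n = M - n + 1) :
    PeriodicWord x := by
  set q : ℕ := M - n + 1 with hqdef
  have hq1 : 1 ≤ q := by omega
  have bij : ∀ k : ℤ, Function.Bijective (fun m : Fin q =>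
      (⟨fzz x n (k + (m : ℤ)), fzz_mem _ _ _⟩ : factorsZ x n)) := by
    intro k
    refine (Nat.bijective_iff_surjective_and_card _).2 ⟨surj_window hB k, ?_⟩
    simp only [Nat.card_eq_fintype_card, Fintype.card_fin]
    exact (hp.trans rfl).symm
  have hper : ∀ j : ℤ, fzz x n (j + (q : ℤ)) = fzz x n j := by
    intro j
    obtain ⟨m, hm⟩ := (bij (j + 1)).2 ⟨fzz x n j, fzz_mem _ _ _⟩
    have hm' : fzz x n (j + 1 + (m : ℤ)) = fzz x n j := congrArg Subtype.val hm
    rcases Nat.lt_or_ge ((m : ℕ) + 1) q with hc | hc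
    · exfalso
      have heq : (fun m : Fin q => (⟨fzz x n (j + (m : ℤ)), fzz_mem _ _ _⟩ : factorsZ x n))
            ⟨(m : ℕ) + 1, hc⟩
          = (fun m : Fin q => (⟨fzz x n (j + (m : ℤ)), fzz_mem _ _ _⟩ : factorsZ x n))
            ⟨0, by omega⟩ := by
        apply Subtype.ext
        show fzz x n (j + (((m : ℕ) + 1 : ℕ) : ℤ)) = fzz x n (j + ((0 : ℕ) : ℤ))
        rw [show j + (((m : ℕ) + 1 : ℕ) : ℤ) = j + 1 + (m : ℤ) by push_cast; ring,
          show j + ((0 : ℕ) : ℤ) = j by simp]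
        exact hm'
      have := (bij j).1 heq
      exact Nat.succ_ne_zero _ (Fin.mk.inj this)
    · have hmq : (m : ℕ) = q - 1 := by omega
      rw [← hm']
      apply congrArg (fzz x n)
      have : ((m : ℕ) : ℤ) = (q : ℤ) - 1 := by omega
      rw [this]; ring
  have hxper : ∀ i : ℤ, x (i + (q : ℤ)) = x i := by
    intro i
    have := congrFun (hper i) ⟨0, hn⟩
    simpa [fzz] using this
  exact ⟨(q : ℤ), by exact_mod_cast hq1, hxper⟩

/-- complexity at 0 is 1 -/
lemma complexityZ_zero {A : Type*} [Fintype A] (x : ℤ → A) : complexityZ x 0 = 1 := by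
  rw [complexityZ, Nat.card_eq_one_iff_unique]
  constructor
  · constructor
    rintro ⟨u, _⟩ ⟨v, _⟩
    apply Subtype.ext
    ext i
    exact i.elim0
  · exact ⟨⟨fzz x 0 0, fzz_mem _ _ _⟩⟩

/-- if two 1-factors only: constant word -/
lemma periodic_of_complexity_one {A : Type*} [Fintype A] {x : ℤ → A}
    (h : complexityZ x 1 ≤ 1) : PeriodicWord x := by
  have hsub : Subsingleton ↥(factorsZ x 1) := Finite.card_le_one_iff_subsingleton.mp h
  refine ⟨1, le_refl _, fun i => ?_⟩
  have := hsub.allEq ⟨fzz x 1 (i + 1), fzz_mem _ _ _⟩ ⟨fzz x 1 i, fzz_mem _ _ _⟩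
  have h2 := congrFun (congrArg Subtype.val this) ⟨0, one_pos⟩
  simpa [fzz] using h2

/-- determinism from non-increasing complexity -/
lemma step_det {A : Type*} [Fintype A] {x : ℤ → A} {m : ℕ}
    (hle : complexityZ x (m + 1) ≤ complexityZ x m) :
    ∀ j j' : ℤ, fzz x m j = fzz x m j' → fzz x m (j + 1) = fzz x m (j' + 1) := by
  have hmem : ∀ u : ↥(factorsZ x (m + 1)),
      (fun i : Fin m => (u : Fin (m + 1) → A) i.castSucc) ∈ factorsZ x m := by
    rintro ⟨u, k, hk⟩
    exact ⟨k, fun i => by simpa using hk i.castSucc⟩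
  set r : ↥(factorsZ x (m + 1)) → ↥(factorsZ x m) :=
    fun u => ⟨fun i => (u : Fin (m + 1) → A) i.castSucc, hmem u⟩ with hr
  have hr_val : ∀ j : ℤ, r ⟨fzz x (m + 1) j, fzz_mem _ _ _⟩ = ⟨fzz x m j, fzz_mem _ _ _⟩ := by
    intro j
    apply Subtype.ext
    ext i
    simp [hr, fzz]
  have hsurj : Function.Surjective r := by
    rintro ⟨v, hv⟩
    obtain ⟨j, rfl⟩ := mem_factorsZ hv
    exact ⟨⟨fzz x (m + 1) j, fzz_mem _ _ _⟩, hr_val j⟩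
  have hbij : Function.Bijective r := by
    refine (Nat.bijective_iff_surjective_and_card _).2 ⟨hsurj, ?_⟩
    have hge : Nat.card ↥(factorsZ x m) ≤ Nat.card ↥(factorsZ x (m + 1)) :=
      Nat.card_le_card_of_surjective _ hsurj
    exact le_antisymm hle hge
  intro j j' h
  have : (⟨fzz x (m + 1) j, fzz_mem _ _ _⟩ : ↥(factorsZ x (m + 1)))
      = ⟨fzz x (m + 1) j', fzz_mem _ _ _⟩ := by
    apply hbij.1
    rw [hr_val, hr_val]
    exact Subtype.ext h
  have hval : fzz x (m + 1) j = fzz x (m + 1) j' := congrArg Subtype.val this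
  ext i
  have := congrFun hval i.succ
  simp only [fzz] at this ⊢
  calc x (j + 1 + (i : ℤ)) = x (j + ((i.succ : Fin (m+1)) : ℤ)) := by
        apply congrArg; simp [Fin.val_succ]; push_cast; ring
    _ = x (j' + ((i.succ : Fin (m+1)) : ℤ)) := this
    _ = x (j' + 1 + (i : ℤ)) := by
        apply congrArg; simp [Fin.val_succ]; push_cast; ring

/-- strict growth of complexity for non-periodic UR words -/
lemma complexity_strict {A : Type*} [Fintype A] {x : ℤ → A} (hUR : UniformlyRecurrent x)
    (hNP : ¬ PeriodicWord x) (m : ℕ) : complexityZ x m < complexityZ x (m + 1) := by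
  by_contra hcon
  push_neg at hcon
  rcases Nat.eq_zero_or_pos m with rfl | hm
  · exact hNP (periodic_of_complexity_one (by simpa [complexityZ_zero] using hcon))
  · have hdet := step_det hcon
    have hiter : ∀ t : ℕ, ∀ j j' : ℤ, fzz x m j = fzz x m j' →
        fzz x m (j + t) = fzz x m (j' + t) := by
      intro t
      induction t with
      | zero => intro j j' h; simpa using h
      | succ t ih =>
          intro j j' h
          have := hdet _ _ (ih j j' h)
          have e1 : j + (t : ℤ) + 1 = j + ((t + 1 : ℕ) : ℤ) := by push_cast; ring
          have e2 : j' + (t : ℤ) + 1 = j' + ((t + 1 : ℕ) : ℤ) := by push_cast; ring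
          rwa [e1, e2] at this
    obtain ⟨a, b, hab, hfab⟩ := Finite.exists_ne_map_eq_of_infinite
      (fun t : ℕ => (⟨fzz x m (t : ℤ), fzz_mem _ _ _⟩ : ↥(factorsZ x m)))
    have hfab' : fzz x m (a : ℤ) = fzz x m (b : ℤ) := congrArg Subtype.val hfab
    wlog hlt : a < b generalizing a b
    · exact this b a hab.symm hfab.symm hfab'.symm (by omega)
    set q : ℕ := b - a with hq
    have hq1 : 1 ≤ q := by omega
    apply hNP
    refine fwd_periodic hUR hq1 (N := (a : ℤ)) ?_
    intro j hj
    have ht : ∃ t : ℕ, j = (a : ℤ) + t := ⟨(j - a).toNat, by omega⟩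
    obtain ⟨t, rfl⟩ := ht
    have := hiter t _ _ hfab'
    have h0 := congrFun this ⟨0, hm⟩
    simp only [fzz] at h0
    have e : (b : ℤ) + (t : ℤ) + ((⟨0, hm⟩ : Fin m) : ℤ) = (a : ℤ) + (t : ℤ) + (q : ℤ) := by
      simp; omega
    rw [e] at h0
    have e2 : (a : ℤ) + (t : ℤ) + ((⟨0, hm⟩ : Fin m) : ℤ) = (a : ℤ) + (t : ℤ) := by simp
    rw [e2] at h0
    exact h0.symm

lemma complexity_ge {A : Type*} [Fintype A] {x : ℤ → A} (hUR : UniformlyRecurrent x)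
    (hNP : ¬ PeriodicWord x) (n : ℕ) : n + 1 ≤ complexityZ x n := by
  induction n with
  | zero => simp [complexityZ_zero]
  | succ n ih => have := complexity_strict hUR hNP n; omega

/-- For a uniformly recurrent non-periodic word,
`R_x(n) ≥ p_x(n) + n ≥ 2n + 1`. -/
theorem stmt4 {A : Type*} [Fintype A] (x : ℤ → A)
    (hUR : UniformlyRecurrent x) (hNP : ¬ PeriodicWord x) (n : ℕ) (hn : 1 ≤ n) :
    complexityZ x n + n ≤ recurrenceFn x n ∧ 2 * n + 1 ≤ recurrenceFn x n := by
  have hmem : IsRecurrenceBound x n (recurrenceFn x n) := Nat.sInf_mem (hUR n)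
  set R := recurrenceFn x n with hRdef
  have hnR : n ≤ R := by
    obtain ⟨j, h1, h2, _⟩ := hmem (fzz x n 0) (fzz_mem _ _ _) 0
    omega
  have hple : complexityZ x n ≤ R - n + 1 := card_factors_le hmem
  have hMH : n + 1 ≤ complexityZ x n := complexity_ge hUR hNP n
  have key : complexityZ x n + n ≤ R := by
    by_contra hcon
    exact hNP (periodic_of_max_complexity hn hnR hmem (by omega))
  exact ⟨key, by omega⟩
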